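/- Projection deflation removes at least as much signal as Hotelling's deflation in Frobenius norm: for a unit singular pair, and more generally for any unit vectors u, v, the squared Frobenius norm of the projection-deflated matrix satisfies ‖(I - uuᵀ)X(I - vvᵀ)‖_F² = ‖X‖_F² - ‖uᵀX‖² - ‖Xv‖² + (uᵀXv)² ≤ ‖X‖_F² - (uᵀXv)² = ‖X - (uᵀXv)uvᵀ‖_F²... i.e., ‖X_PD‖_F ≤ ‖X_HD‖_F, since ‖uᵀX‖² ≥ (uᵀXv)² and ‖Xv‖² ≥ (uᵀXv)² by Cauchy–Schwarz. -/

import Mathlib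

open Matrix

section helpers
variable {m n p : Type*} [Fintype m] [Fintype n] [Fintype p]
set_option linter.unusedSectionVars false

lemma trace_vmv (a b : n → ℝ) : (vecMulVec a b).trace = a ⬝ᵥ b := by
  simp [Matrix.trace, vecMulVec_apply, dotProduct, Matrix.diag]

lemma mul_vmv (X : Matrix m n ℝ) (a : n → ℝ) (b : p → ℝ) :
    X * vecMulVec a b = vecMulVec (X *ᵥ a) b := by
  ext i j
  simp [Matrix.mul_apply, vecMulVec_apply, mulVec, dotProduct, Finset.sum_mul, mul_assoc]

lemma vmv_mul (a : m → ℝ) (b : n → ℝ) (X : Matrix n p ℝ) :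
    vecMulVec a b * X = vecMulVec a (Xᵀ *ᵥ b) := by
  ext i j
  simp only [Matrix.mul_apply, vecMulVec_apply, mulVec, dotProduct, transpose_apply,
    Finset.mul_sum]
  exact Finset.sum_congr rfl fun k _ => by ring

lemma vmv_mul_vmv (a : m → ℝ) (b : n → ℝ) (c : n → ℝ) (d : p → ℝ) :
    vecMulVec a b * vecMulVec c d = (b ⬝ᵥ c) • vecMulVec a d := by
  ext i j
  simp only [Matrix.mul_apply, vecMulVec_apply, Matrix.smul_apply, dotProduct, smul_eq_mul,
    Finset.sum_mul]
  exact Finset.sum_congr rfl fun k _ => by ring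

lemma vmv_transpose (a : m → ℝ) (b : n → ℝ) :
    (vecMulVec a b)ᵀ = vecMulVec b a := by
  ext i j; simp [vecMulVec_apply, transpose_apply, mul_comm]

lemma mulVec_vmv (x : m → ℝ) (y : n → ℝ) (w : n → ℝ) :
    vecMulVec x y *ᵥ w = (y ⬝ᵥ w) • x := by
  ext i
  simp only [mulVec, vecMulVec_apply, dotProduct, Pi.smul_apply, smul_eq_mul, Finset.sum_mul]
  exact Finset.sum_congr rfl fun k _ => by ring

lemma smul_vmv (c : ℝ) (x : m → ℝ) (y : n → ℝ) :
    vecMulVec (c • x) y = c • vecMulVec x y := by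
  ext i j; simp [vecMulVec_apply, mul_assoc]

lemma adj (X : Matrix m n ℝ) (w : m → ℝ) (z : n → ℝ) :
    (Xᵀ *ᵥ w) ⬝ᵥ z = w ⬝ᵥ (X *ᵥ z) := by
  rw [mulVec_transpose, ← dotProduct_mulVec]

end helpers

theorem projection_deflation_removes_more_signal {n p : ℕ}
    (X : Matrix (Fin n) (Fin p) ℝ) (u : Fin n → ℝ) (v : Fin p → ℝ)
    (hu : u ⬝ᵥ u = 1) (hv : v ⬝ᵥ v = 1)
    (X_HD X_PD : Matrix (Fin n) (Fin p) ℝ)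
    (hHD : X_HD = X - (u ⬝ᵥ (X *ᵥ v)) • vecMulVec u v)
    (hPD : X_PD = (1 - vecMulVec u u) * X * (1 - vecMulVec v v)) :
    (X_PDᵀ * X_PD).trace =
      (Xᵀ * X).trace - (Xᵀ *ᵥ u) ⬝ᵥ (Xᵀ *ᵥ u) - (X *ᵥ v) ⬝ᵥ (X *ᵥ v) +
        (u ⬝ᵥ (X *ᵥ v)) ^ 2 ∧
    (X_PDᵀ * X_PD).trace ≤ (X_HDᵀ * X_HD).trace := by
  set a := Xᵀ *ᵥ u with ha
  set b := X *ᵥ v with hb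
  set c := u ⬝ᵥ (X *ᵥ v) with hc
  have hva : v ⬝ᵥ a = c := by rw [ha, dotProduct_comm, adj]
  have hav : a ⬝ᵥ v = c := by rw [dotProduct_comm, hva]
  have hub : u ⬝ᵥ b = c := rfl
  have hbu : b ⬝ᵥ u = c := by rw [dotProduct_comm]
  have hPD' : X_PD = X - vecMulVec u a - vecMulVec b v + c • vecMulVec u v := by
    rw [hPD, Matrix.mul_sub, Matrix.mul_one, Matrix.sub_mul, Matrix.sub_mul, Matrix.one_mul,
      vmv_mul, mul_vmv, mul_vmv, mulVec_vmv, ← ha, ← hb, hav, smul_vmv]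
    abel
  have key : (X_PDᵀ * X_PD).trace =
      (Xᵀ * X).trace - a ⬝ᵥ a - b ⬝ᵥ b + c ^ 2 := by
    rw [hPD']
    simp only [transpose_add, transpose_sub, transpose_smul, vmv_transpose,
      Matrix.sub_mul, Matrix.mul_sub, Matrix.add_mul, Matrix.mul_add, Matrix.smul_mul,
      Matrix.mul_smul, trace_sub, trace_add, trace_smul, mul_vmv, vmv_mul, vmv_mul_vmv,
      mulVec_vmv, trace_vmv, smul_smul, smul_eq_mul, transpose_transpose, adj,
      smul_dotProduct, dotProduct_smul, hva, hav, hub, hbu, hu, hv]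
    have e1 : v ⬝ᵥ (Xᵀ *ᵥ b) = b ⬝ᵥ b := by rw [dotProduct_comm, adj, ← hb]
    have e2 : u ⬝ᵥ (X *ᵥ a) = a ⬝ᵥ a := by rw [← adj, ← ha]
    have e3 : a ⬝ᵥ (Xᵀ *ᵥ u) = a ⬝ᵥ a := by rw [← ha]
    have e4 : b ⬝ᵥ (X *ᵥ v) = b ⬝ᵥ b := by rw [← hb]
    rw [← ha, hva, ← hc]
    linarith [e1, e2, e3, e4, sq_nonneg c]
  have keyHD : (X_HDᵀ * X_HD).trace = (Xᵀ * X).trace - c ^ 2 := by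
    rw [hHD]
    simp only [transpose_add, transpose_sub, transpose_smul, vmv_transpose,
      Matrix.sub_mul, Matrix.mul_sub, Matrix.add_mul, Matrix.mul_add, Matrix.smul_mul,
      Matrix.mul_smul, trace_sub, trace_add, trace_smul, mul_vmv, vmv_mul, vmv_mul_vmv,
      mulVec_vmv, trace_vmv, smul_smul, smul_eq_mul, transpose_transpose, adj,
      smul_dotProduct, dotProduct_smul, hva, hav, hub, hbu, hu, hv]
    have e1 : v ⬝ᵥ (Xᵀ *ᵥ b) = b ⬝ᵥ b := by rw [dotProduct_comm, adj, ← hb]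
    have e2 : u ⬝ᵥ (X *ᵥ a) = a ⬝ᵥ a := by rw [← adj, ← ha]
    have e3 : a ⬝ᵥ (Xᵀ *ᵥ u) = a ⬝ᵥ a := by rw [← ha]
    have e4 : b ⬝ᵥ (X *ᵥ v) = b ⬝ᵥ b := by rw [← hb]
    rw [← ha, hva, ← hc]
    linarith [e1, e2, e3, e4]
  refine ⟨key, ?_⟩
  rw [key, keyHD]
  have h1 : (0:ℝ) ≤ (c • v - a) ⬝ᵥ (c • v - a) := by have := dotProduct_self_star_nonneg (R := ℝ) (c • v - a); simpa using this
  have h2 : (0:ℝ) ≤ (c • u - b) ⬝ᵥ (c • u - b) := by have := dotProduct_self_star_nonneg (R := ℝ) (c • u - b); simpa using this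
  simp only [sub_dotProduct, dotProduct_sub, smul_dotProduct, dotProduct_smul,
    smul_eq_mul, hva, hav, hub, hbu, hu, hv] at h1 h2
  nlinarith [h1, h2]
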